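/- For every integer r ≥ 2 and every positive integer m, there exists a subset D ⊆ {1, 2, ..., m} of size at least m / e^{5√(log m · log r)} such that for any d_0, d_1, ..., d_r ∈ D, the equation d_0 + d_1 + ... + d_{r-1} = r·d_r holds only if d_0 = d_1 = ... = d_r. -/

import Mathlib

set_option maxHeartbeats 1000000

open Finset Real

lemma map_lt_pow {n q : ℕ} (hq : 1 ≤ q) (x : Fin n → ℕ) (hx : ∀ i, x i < q) :
    Behrend.map q x < q ^ n := by
  induction n with
  | zero => simpa [Behrend.map] using Nat.one_pos
  | succ n ih =>
    have h0 : x 0 < q := hx 0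
    have ht : Behrend.map q (x ∘ Fin.succ) < q ^ n := ih (x ∘ Fin.succ) (fun i => hx i.succ)
    rw [Behrend.map_succ']
    calc x 0 + Behrend.map q (x ∘ Fin.succ) * q
        ≤ (q - 1) + (q ^ n - 1) * q := by
          exact Nat.add_le_add (Nat.le_sub_one_of_lt h0)
            (Nat.mul_le_mul_right q (Nat.le_sub_one_of_lt ht))
      _ < q ^ (n + 1) := by
          have hqn : 1 ≤ q ^ n := Nat.one_le_pow _ _ hq
          have : (q ^ n - 1) * q = q ^ n * q - q := by
            rw [Nat.sub_mul, one_mul]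
          rw [this, pow_succ]
          have : q ≤ q ^ n * q := Nat.le_mul_of_pos_left q hqn
          omega

lemma analytic (r m : ℕ) (hr : 2 ≤ r) (hm : 1 ≤ m)
    (hcase : 25 * Real.log r < Real.log m) :
    ∃ n L : ℕ, 1 ≤ n ∧ 2 ≤ L ∧ (r * L) ^ n ≤ m ∧
      (m : ℝ) / Real.exp (5 * Real.sqrt (Real.log m * Real.log r)) ≤
        ((L ^ n : ℕ) : ℝ) / ((n * L ^ 2 : ℕ) : ℝ) := by
  have hrpos : (0:ℝ) < r := by positivity
  have hmpos : (0:ℝ) < m := by exact_mod_cast hm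
  set lm := Real.log m with hlm_def
  set lr := Real.log r with hlr_def
  have hlr : 0 < lr := Real.log_pos (by exact_mod_cast hr)
  have hlm : 0 ≤ lm := Real.log_natCast_nonneg m
  have hl2r : Real.log 2 ≤ lr := Real.log_le_log (by norm_num) (by exact_mod_cast hr)
  have hl2 : (0.6931471803 : ℝ) < Real.log 2 := Real.log_two_gt_d9
  set s := Real.sqrt (lm / lr) with hs_def
  have hs0 : 0 ≤ s := Real.sqrt_nonneg _
  have hs2 : s ^ 2 = lm / lr := Real.sq_sqrt (by positivity)
  have hs5 : 5 < s := by
    have h25 : (25:ℝ) < lm / lr := (lt_div_iff₀ hlr).2 (by linarith)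
    nlinarith [hs0]
  have fact0 : lm = s ^ 2 * lr := by rw [hs2]; field_simp
  have factS : Real.sqrt (lm * lr) = s * lr := by
    have : lm * lr = (lm / lr) * lr ^ 2 := by field_simp
    rw [this, Real.sqrt_mul (by positivity), Real.sqrt_sq hlr.le]
  set n := ⌈s⌉₊ with hn_def
  have hn1 : s ≤ (n:ℝ) := Nat.le_ceil s
  have hn2 : (n:ℝ) < s + 1 := Nat.ceil_lt_add_one hs0
  have hnpos : 0 < n := by
    have : 0 < (n:ℝ) := by linarith
    exact_mod_cast this
  have hnR : (0:ℝ) < n := by linarith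
  set A := (m:ℝ) ^ ((n:ℝ)⁻¹) with hA_def
  have hApos : 0 < A := Real.rpow_pos_of_pos hmpos _
  have hAn : A ^ n = m := Real.rpow_inv_natCast_pow hmpos.le hnpos.ne'
  have hlogA : Real.log A = lm / n := by
    rw [hA_def, Real.log_rpow hmpos]
    rw [inv_mul_eq_div]
  -- lm / n ≥ lr + log 2
  have hd1 : lr + Real.log 2 ≤ lm / n := by
    rw [le_div_iff₀ hnR, fact0]
    have c1 : (lr + Real.log 2) * n ≤ (lr + Real.log 2) * (s+1) :=
      mul_le_mul_of_nonneg_left hn2.le (by positivity)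
    have c2 : (lr + Real.log 2) * (s+1) ≤ 2*lr*(s+1) :=
      mul_le_mul_of_nonneg_right (by linarith) (by linarith)
    have c3 : (0:ℝ) ≤ lr * (s*s - 2*s - 2) :=
      mul_nonneg hlr.le (by nlinarith)
    nlinarith [c1, c2, c3]
  -- lm / n ≤ s * lr
  have hd2 : lm / n ≤ s * lr := by
    rw [div_le_iff₀ hnR, fact0]
    nlinarith [hn1, hlr.le, hs5]
  have hAr2 : (2:ℝ) ≤ A / r := by
    have hpos : (0:ℝ) < A / r := by positivity
    have : Real.log 2 ≤ Real.log (A / r) := by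
      rw [Real.log_div hApos.ne' hrpos.ne', hlogA]
      linarith
    calc (2:ℝ) = Real.exp (Real.log 2) := (Real.exp_log two_pos).symm
      _ ≤ Real.exp (Real.log (A / r)) := Real.exp_le_exp.2 this
      _ = A / r := Real.exp_log hpos
  set L := ⌊A / r⌋₊ with hL_def
  have hL2 : 2 ≤ L := Nat.le_floor (by exact_mod_cast hAr2)
  have hLub : (L:ℝ) ≤ A / r := Nat.floor_le (by positivity)
  have hLlb : A / (2 * r) ≤ (L:ℝ) := by
    have h1 : A / r - 1 < (L:ℝ) := Nat.sub_one_lt_floor _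
    have h2 : A / (2 * r) = (A / r) / 2 := by ring
    linarith
  have hLpos : (0:ℝ) < L := by
    have : (0:ℕ) < L := by omega
    exact_mod_cast this
  refine ⟨n, L, hnpos, hL2, ?_, ?_⟩
  · -- (r*L)^n ≤ m
    have h1 : ((r * L : ℕ) : ℝ) ≤ A := by
      push_cast
      rw [mul_comm]
      calc (L:ℝ) * r ≤ (A / r) * r := by
            exact mul_le_mul_of_nonneg_right hLub hrpos.le
        _ = A := by field_simp
    have h2 : (((r * L) ^ n : ℕ) : ℝ) ≤ (m:ℝ) := by
      push_cast
      calc ((r:ℝ) * L) ^ n ≤ A ^ n := by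
            apply pow_le_pow_left₀ (by positivity) (by push_cast at h1 ⊢; linarith)
        _ = m := hAn
    exact_mod_cast h2
  · -- main bound
    rw [factS]
    -- upper bound for log L
    have hlogL : Real.log L ≤ lm / n - lr := by
      calc Real.log L ≤ Real.log (A / r) := Real.log_le_log hLpos hLub
        _ = lm / n - lr := by rw [Real.log_div hApos.ne' hrpos.ne', hlogA]
    -- log n ≤ s * lr
    have hlogn : Real.log n ≤ s * lr := by
      have h6 : (0:ℝ) < (s + 1) / 6 := by linarith
      have e1 : Real.log (s + 1) = Real.log ((s + 1) / 6) + Real.log 6 := by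
        rw [← Real.log_mul (by positivity) (by norm_num)]
        norm_num
      have e2 : Real.log ((s + 1) / 6) ≤ (s + 1) / 6 - 1 :=
        Real.log_le_sub_one_of_pos h6
      have e3 : Real.log 6 ≤ 3 * Real.log 2 := by
        calc Real.log 6 ≤ Real.log 8 := Real.log_le_log (by norm_num) (by norm_num)
          _ = 3 * Real.log 2 := by
            rw [show (8:ℝ) = 2 ^ (3:ℕ) by norm_num, Real.log_pow]
            norm_num
      have e4 : Real.log n ≤ Real.log (s + 1) :=
        Real.log_le_log hnR (by linarith)
      have e5 : Real.log (s + 1) ≤ s * Real.log 2 := by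
        rw [e1]
        nlinarith [hl2, hs5]
      calc Real.log n ≤ s * Real.log 2 := le_trans e4 e5
        _ ≤ s * lr := by nlinarith [hs0]
    -- exponent bound: (2r)^n * (n * L^2) ≤ exp (5 * (s * lr))
    have hexp : ((2*(r:ℝ)) ^ n) * ((n:ℝ) * (L:ℝ)^2) ≤ Real.exp (5 * (s * lr)) := by
      have hTpos : (0:ℝ) < ((2*(r:ℝ)) ^ n) * ((n:ℝ) * (L:ℝ)^2) := by positivity
      have hlogT : Real.log (((2*(r:ℝ)) ^ n) * ((n:ℝ) * (L:ℝ)^2)) =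
          n * Real.log (2*(r:ℝ)) + (Real.log n + 2 * Real.log L) := by
        rw [Real.log_mul (by positivity) (by positivity),
            Real.log_mul (by positivity) (by positivity),
            Real.log_pow, Real.log_pow]
        push_cast
        ring
      have hlog2r : Real.log (2*(r:ℝ)) = Real.log 2 + lr :=
        Real.log_mul (by norm_num) hrpos.ne'
      have hb : Real.log (((2*(r:ℝ)) ^ n) * ((n:ℝ) * (L:ℝ)^2)) ≤ 5 * (s * lr) := by
        rw [hlogT, hlog2r]
        have h1 : (n:ℝ) * (Real.log 2 + lr) ≤ (s + 1) * (2 * lr) := by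
          have c1 : (n:ℝ) * (Real.log 2 + lr) ≤ (s+1) * (Real.log 2 + lr) :=
            mul_le_mul_of_nonneg_right hn2.le (by positivity)
          have c2 : (s+1) * (Real.log 2 + lr) ≤ (s+1) * (2*lr) :=
            mul_le_mul_of_nonneg_left (by linarith) (by linarith)
          linarith
        linarith [h1, hlogn, hlogL, hd2]
      calc ((2*(r:ℝ)) ^ n) * ((n:ℝ) * (L:ℝ)^2)
          = Real.exp (Real.log (((2*(r:ℝ)) ^ n) * ((n:ℝ) * (L:ℝ)^2))) :=
            (Real.exp_log hTpos).symm
        _ ≤ _ := Real.exp_le_exp.2 hb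
    -- m ≤ (2r)^n * L^n
    have hmA : (m:ℝ) ≤ ((2*(r:ℝ)) ^ n) * (L:ℝ)^n := by
      have h1 : A ≤ 2 * r * L := by
        have := mul_le_mul_of_nonneg_right hLlb (by positivity : (0:ℝ) ≤ 2*r)
        calc A = A / (2*r) * (2*r) := by field_simp
          _ ≤ (L:ℝ) * (2*r) := by
              exact mul_le_mul_of_nonneg_right hLlb (by positivity)
          _ = 2 * r * L := by ring
      calc (m:ℝ) = A ^ n := hAn.symm
        _ ≤ (2 * (r:ℝ) * L) ^ n := pow_le_pow_left₀ hApos.le h1 n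
        _ = ((2*(r:ℝ)) ^ n) * (L:ℝ)^n := by rw [mul_pow]
    -- combine
    have hden : (0:ℝ) < ((n * L ^ 2 : ℕ) : ℝ) := by positivity
    rw [div_le_div_iff₀ (Real.exp_pos _) hden]
    push_cast
    calc (m:ℝ) * ((n:ℝ) * (L:ℝ)^2)
        ≤ (((2*(r:ℝ)) ^ n) * (L:ℝ)^n) * ((n:ℝ) * (L:ℝ)^2) := by
          apply mul_le_mul_of_nonneg_right hmA (by positivity)
      _ = (L:ℝ)^n * (((2*(r:ℝ)) ^ n) * ((n:ℝ) * (L:ℝ)^2)) := by ring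
      _ ≤ (L:ℝ)^n * Real.exp (5 * (s * lr)) := by
          apply mul_le_mul_of_nonneg_left hexp (by positivity)

open Finset

lemma sphere_no_sol (r n L k : ℕ) (hr : 1 ≤ r) (hL : 1 ≤ L)
    (x : ℕ → (Fin n → ℕ)) (hx : ∀ i ≤ r, x i ∈ Behrend.sphere n L k)
    (hsum : (∑ i ∈ Finset.range r, Behrend.map (r*L) (x i)) =
      r * Behrend.map (r*L) (x r)) :
    ∀ i ≤ r, x i = x r := by
  have hbox : ∀ i ≤ r, ∀ j, x i j < L := fun i hi j =>
    Behrend.mem_box.1 (Behrend.sphere_subset_box (hx i hi)) j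
  have hsph : ∀ i ≤ r, (∑ j, x i j ^ 2) = k := fun i hi =>
    (Finset.mem_filter.1 (hx i hi)).2
  -- digitwise equation
  have hvec : (∑ i ∈ range r, x i) = r • x r := by
    apply Behrend.map_injOn (d := r * L) ?_ ?_
    · rw [map_sum, AddMonoidHom.map_nsmul, smul_eq_mul]
      exact hsum
    · intro j
      simp only [Finset.sum_apply]
      calc (∑ i ∈ range r, x i j) ≤ ∑ i ∈ range r, (L - 1) := by
            refine Finset.sum_le_sum fun i hi => ?_
            exact Nat.le_sub_one_of_lt (hbox i (le_of_lt (mem_range.1 hi)) j)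
        _ = r * (L - 1) := by rw [Finset.sum_const, card_range, smul_eq_mul]
        _ < r * L := Nat.mul_lt_mul_of_pos_left (Nat.sub_lt hL one_pos) (by omega)
    · intro j
      simp only [Pi.smul_apply, smul_eq_mul]
      exact Nat.mul_lt_mul_of_pos_left (hbox r le_rfl j) (by omega)
  have hpt : ∀ j, (∑ i ∈ range r, x i j) = r * x r j := by
    intro j
    have := congr_fun hvec j
    simpa [Finset.sum_apply] using this
  -- the quadratic trick over ℤ
  have key : (∑ i ∈ range r, ∑ j, ((x i j : ℤ) - (x r j : ℤ))^2) = 0 := by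
    have expand : ∀ i ≤ r, (∑ j, ((x i j : ℤ) - (x r j : ℤ))^2) =
        (k : ℤ) + (k : ℤ) - 2 * ∑ j, (x i j : ℤ) * (x r j : ℤ) := by
      intro i hi
      have h1 : (∑ j, (x i j : ℤ)^2) = (k : ℤ) := by
        rw [← hsph i hi]; push_cast; ring
      have h2 : (∑ j, (x r j : ℤ)^2) = (k : ℤ) := by
        rw [← hsph r le_rfl]; push_cast; ring
      calc (∑ j, ((x i j : ℤ) - (x r j : ℤ))^2)
          = (∑ j, (x i j : ℤ)^2) + (∑ j, (x r j : ℤ)^2)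
            - 2 * ∑ j, (x i j : ℤ) * (x r j : ℤ) := by
            rw [Finset.mul_sum, ← Finset.sum_add_distrib, ← Finset.sum_sub_distrib]
            exact Finset.sum_congr rfl fun j _ => by ring
        _ = _ := by rw [h1, h2]
    have h2 : (∑ j, (x r j : ℤ)^2) = (k : ℤ) := by
      rw [← hsph r le_rfl]; push_cast; ring
    calc (∑ i ∈ range r, ∑ j, ((x i j : ℤ) - (x r j : ℤ))^2)
        = ∑ i ∈ range r, ((k:ℤ) + k - 2 * ∑ j, (x i j : ℤ) * (x r j : ℤ)) :=
          Finset.sum_congr rfl fun i hi => expand i (le_of_lt (mem_range.1 hi))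
      _ = (r:ℤ) * ((k:ℤ)+k) - 2 * ∑ i ∈ range r, ∑ j, (x i j : ℤ) * (x r j : ℤ) := by
          rw [Finset.sum_sub_distrib, Finset.sum_const, card_range, ← Finset.mul_sum]
          push_cast; ring
      _ = (r:ℤ) * ((k:ℤ)+k) - 2 * ∑ j, ((r:ℤ) * (x r j : ℤ)) * (x r j : ℤ) := by
          rw [Finset.sum_comm]
          congr 1
          congr 1
          refine Finset.sum_congr rfl fun j _ => ?_
          rw [← Finset.sum_mul]
          congr 1
          exact_mod_cast congrArg (fun t : ℕ => (t : ℤ)) (hpt j)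
      _ = 0 := by
          have h3 : (∑ j, ((r:ℤ) * (x r j : ℤ)) * (x r j : ℤ)) = (r:ℤ) * k := by
            rw [← h2, Finset.mul_sum]
            exact Finset.sum_congr rfl fun j _ => by ring
          rw [h3]; ring
  intro i hi
  rcases eq_or_lt_of_le hi with rfl | hilt
  · rfl
  have h0 : (∑ j, ((x i j : ℤ) - (x r j : ℤ))^2) = 0 := by
    exact (Finset.sum_eq_zero_iff_of_nonneg (fun i _ => Finset.sum_nonneg
      (fun j _ => sq_nonneg _))).1 key i (mem_range.2 hilt)
  funext j
  have hj := (Finset.sum_eq_zero_iff_of_nonneg (fun j _ => sq_nonneg _)).1 h0 j (mem_univ j)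
  have hj2 := pow_eq_zero_iff (n := 2) (by norm_num) |>.1 hj
  have : (x i j : ℤ) = (x r j : ℤ) := by linarith [sub_eq_zero.1 hj2]
  exact_mod_cast this
/-- Alon's lemma: for every r ≥ 2 and positive integer m there is a subset
`D ⊆ {1,…,m}` of size at least `m / e^{5√(log m log r)}` avoiding nontrivial
solutions of `d₀ + ⋯ + d_{r-1} = r·d_r`. -/
theorem statement0 (r m : ℕ) (hr : 2 ≤ r) (hm : 1 ≤ m) :
    ∃ D : Finset ℕ, D ⊆ Finset.Icc 1 m ∧
      (m : ℝ) / Real.exp (5 * Real.sqrt (Real.log m * Real.log r)) ≤ D.card ∧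
      ∀ d : ℕ → ℕ, (∀ i ≤ r, d i ∈ D) →
        (∑ i ∈ Finset.range r, d i) = r * d r → ∀ i ≤ r, ∀ j ≤ r, d i = d j := by
  have hlr : 0 < Real.log r := Real.log_pos (by exact_mod_cast hr)
  have hlm : 0 ≤ Real.log m := Real.log_natCast_nonneg m
  rcases le_or_gt (Real.log m) (25 * Real.log r) with hcase | hcase
  · -- trivial case: D = {1}
    refine ⟨{1}, by simp [Finset.singleton_subset_iff, Finset.mem_Icc, hm], ?_, ?_⟩
    · have h5 : Real.sqrt (Real.log m) ≤ 5 * Real.sqrt (Real.log r) := by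
        calc Real.sqrt (Real.log m) ≤ Real.sqrt (25 * Real.log r) :=
              Real.sqrt_le_sqrt hcase
          _ = 5 * Real.sqrt (Real.log r) := by
            rw [show (25:ℝ) * Real.log r = 5^2 * Real.log r by norm_num,
              Real.sqrt_mul (by positivity), Real.sqrt_sq (by norm_num)]
      have hlog : Real.log m ≤ 5 * Real.sqrt (Real.log m * Real.log r) := by
        have e1 : Real.sqrt (Real.log m * Real.log r)
            = Real.sqrt (Real.log m) * Real.sqrt (Real.log r) := Real.sqrt_mul hlm _
        have e2 : Real.log m = Real.sqrt (Real.log m) * Real.sqrt (Real.log m) :=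
          (Real.mul_self_sqrt hlm).symm
        rw [e1]
        nlinarith [e2, h5, Real.sqrt_nonneg (Real.log m), Real.sqrt_nonneg (Real.log r)]
      have hmle : (m:ℝ) ≤ Real.exp (5 * Real.sqrt (Real.log m * Real.log r)) := by
        calc (m:ℝ) = Real.exp (Real.log m) :=
              (Real.exp_log (by exact_mod_cast hm)).symm
          _ ≤ _ := Real.exp_le_exp.2 hlog
      rw [Finset.card_singleton]
      push_cast
      rw [div_le_one (Real.exp_pos _)]
      exact hmle
    · intro d hd _ i hi j hj
      have h1 := hd i hi
      have h2 := hd j hj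
      simp only [Finset.mem_singleton] at h1 h2
      rw [h1, h2]
  · -- hard case: Behrend-type construction
    obtain ⟨n, L, hn1, hL2, hqm, hbound⟩ := analytic r m hr hm hcase
    obtain ⟨k, hk⟩ := Behrend.exists_large_sphere n L
    have hr1 : 1 ≤ r := by omega
    have hL1 : 1 ≤ L := by omega
    have hrL : 1 ≤ r * L := Nat.one_le_iff_ne_zero.2 (by positivity)
    have hLrL : L ≤ r * L := Nat.le_mul_of_pos_left L (by omega)
    refine ⟨(Behrend.sphere n L k).image (fun x => Behrend.map (r*L) x + 1), ?_, ?_, ?_⟩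
    · -- subset of Icc 1 m
      intro y hy
      obtain ⟨x, hx, rfl⟩ := Finset.mem_image.1 hy
      have hxb : ∀ i, x i < r * L := fun i =>
        lt_of_lt_of_le (Behrend.mem_box.1 (Behrend.sphere_subset_box hx) i) hLrL
      have := map_lt_pow hrL x hxb
      rw [Finset.mem_Icc]
      omega
    · -- cardinality
      have hinj : Set.InjOn (fun x => Behrend.map (r*L) x + 1)
          (Behrend.sphere n L k : Set (Fin n → ℕ)) := by
        intro a ha b hb hab
        have hab' : Behrend.map (r*L) a = Behrend.map (r*L) b := by simpa using hab
        refine Behrend.map_injOn ?_ ?_ hab'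
        · exact fun i => lt_of_lt_of_le
            (Behrend.mem_box.1 (Behrend.sphere_subset_box ha) i) hLrL
        · exact fun i => lt_of_lt_of_le
            (Behrend.mem_box.1 (Behrend.sphere_subset_box hb) i) hLrL
      rw [Finset.card_image_of_injOn hinj]
      exact le_trans hbound hk
    · -- no nontrivial solutions
      intro d hd hsum i hi j hj
      have hchoice : ∀ i, ∃ a, i ≤ r →
          a ∈ Behrend.sphere n L k ∧ Behrend.map (r*L) a + 1 = d i := by
        intro i
        by_cases h : i ≤ r
        · obtain ⟨a, ha, hai⟩ := Finset.mem_image.1 (hd i h)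
          exact ⟨a, fun _ => ⟨ha, hai⟩⟩
        · exact ⟨0, fun h' => absurd h' h⟩
      choose x hx using hchoice
      have hmem : ∀ i ≤ r, x i ∈ Behrend.sphere n L k := fun i hi => (hx i hi).1
      have hdi : ∀ i ≤ r, d i = Behrend.map (r*L) (x i) + 1 :=
        fun i hi => ((hx i hi).2).symm
      have hsum' : (∑ i ∈ Finset.range r, Behrend.map (r*L) (x i)) =
          r * Behrend.map (r*L) (x r) := by
        have e1 : (∑ i ∈ Finset.range r, d i) =
            (∑ i ∈ Finset.range r, Behrend.map (r*L) (x i)) + r := by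
          rw [Finset.sum_congr rfl
            (fun i hi => hdi i (le_of_lt (Finset.mem_range.1 hi)))]
          rw [Finset.sum_add_distrib, Finset.sum_const, Finset.card_range,
            smul_eq_mul, mul_one]
        have e2 : r * d r = r * Behrend.map (r*L) (x r) + r := by
          rw [hdi r le_rfl]; ring
        omega
      have heq := sphere_no_sol r n L k hr1 hL1 x hmem hsum'
      rw [hdi i hi, hdi j hj, heq i hi, heq j hj]
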